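/- Let N ≥ 1 and let A, B be real symmetric N × N matrices. Let K = ker A, let q be the maximal dimension of a subspace of ℝ^N on which the quadratic form x ↦ xᵀAx is negative definite, and let q' be the maximal dimension of a subspace of K on which x ↦ xᵀBx is negative definite. Assume the bilinear form (x, y) ↦ xᵀBy restricted to K is nondegenerate (i.e., for every nonzero x ∈ K there exists y ∈ K with xᵀBy ≠ 0). Then there exists ε₁ > 0 such that for every ε with 0 < ε < ε₁, the matrix (1/ε)·A + B is invertible, and the maximal dimension of a subspace of ℝ^N on which the quadratic form x ↦ xᵀ((1/ε)A + B)x is negative definite equals q + q'. -/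

import Mathlib

open Matrix

namespace IndexPerturbAux

variable {N : ℕ}

lemma bform_symm {M : Matrix (Fin N) (Fin N) ℝ} (hM : M.IsSymm)
    (x y : Fin N → ℝ) : x ⬝ᵥ M.mulVec y = y ⬝ᵥ M.mulVec x := by
  rw [Matrix.dotProduct_mulVec, ← Matrix.mulVec_transpose, hM.eq, dotProduct_comm]

lemma continuous_quad (M : Matrix (Fin N) (Fin N) ℝ) :
    Continuous fun x : Fin N → ℝ => x ⬝ᵥ M.mulVec x := by
  simp only [dotProduct, Matrix.mulVec]
  exact continuous_finset_sum _ fun i _ =>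
    (continuous_apply i).mul (continuous_finset_sum _ fun j _ =>
      continuous_const.mul (continuous_apply j))

lemma quad_add (M : Matrix (Fin N) (Fin N) ℝ) (x y : Fin N → ℝ) :
    (x + y) ⬝ᵥ M.mulVec (x + y)
      = x ⬝ᵥ M.mulVec x + x ⬝ᵥ M.mulVec y + y ⬝ᵥ M.mulVec x + y ⬝ᵥ M.mulVec y := by
  rw [Matrix.mulVec_add, add_dotProduct]
  simp [dotProduct_add]; ring

lemma bform_smul_left (M : Matrix (Fin N) (Fin N) ℝ) (t : ℝ) (x y : Fin N → ℝ) :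
    (t • x) ⬝ᵥ M.mulVec y = t * (x ⬝ᵥ M.mulVec y) := by
  rw [smul_dotProduct, smul_eq_mul]

lemma bform_smul_right (M : Matrix (Fin N) (Fin N) ℝ) (t : ℝ) (x y : Fin N → ℝ) :
    x ⬝ᵥ M.mulVec (t • y) = t * (x ⬝ᵥ M.mulVec y) := by
  rw [Matrix.mulVec_smul, dotProduct_smul, smul_eq_mul]

lemma quad_smul (M : Matrix (Fin N) (Fin N) ℝ) (t : ℝ) (x : Fin N → ℝ) :
    (t • x) ⬝ᵥ M.mulVec (t • x) = t ^ 2 * (x ⬝ᵥ M.mulVec x) := by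
  rw [bform_smul_left, bform_smul_right]; ring

lemma quad_decomp (A B : Matrix (Fin N) (Fin N) ℝ) (c : ℝ) (u : Fin N → ℝ) :
    u ⬝ᵥ (c • A + B).mulVec u = c * (u ⬝ᵥ A.mulVec u) + u ⬝ᵥ B.mulVec u := by
  rw [Matrix.add_mulVec, Matrix.smul_mulVec, dotProduct_add,
    dotProduct_smul, smul_eq_mul]

/-- the linear functional `y ↦ x ⬝ᵥ M *ᵥ y` -/
def bformR (M : Matrix (Fin N) (Fin N) ℝ) (x : Fin N → ℝ) :
    (Fin N → ℝ) →ₗ[ℝ] ℝ where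
  toFun := fun y => x ⬝ᵥ M.mulVec y
  map_add' := fun y z => by
    simp only [Matrix.mulVec_add, dotProduct_add]
  map_smul' := fun t y => by
    simp only [Matrix.mulVec_smul, dotProduct_smul, smul_eq_mul, RingHom.id_apply]

/-- the linear functional `y ↦ y ⬝ᵥ M *ᵥ x` -/
def bformL (M : Matrix (Fin N) (Fin N) ℝ) (x : Fin N → ℝ) :
    (Fin N → ℝ) →ₗ[ℝ] ℝ where
  toFun := fun y => y ⬝ᵥ M.mulVec x
  map_add' := fun y z => by simp only [add_dotProduct]
  map_smul' := fun t y => by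
    simp only [smul_dotProduct, smul_eq_mul, RingHom.id_apply]

lemma psd_null (M : Matrix (Fin N) (Fin N) ℝ) (hM : M.IsSymm)
    (U : Submodule ℝ (Fin N → ℝ)) (hpsd : ∀ x ∈ U, 0 ≤ x ⬝ᵥ M.mulVec x)
    {x : Fin N → ℝ} (hx : x ∈ U) (hx0 : x ⬝ᵥ M.mulVec x = 0) :
    ∀ y ∈ U, x ⬝ᵥ M.mulVec y = 0 := by
  intro y hy
  have key : ∀ t : ℝ, 0 ≤ 2 * t * (x ⬝ᵥ M.mulVec y) + t ^ 2 * (y ⬝ᵥ M.mulVec y) := by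
    intro t
    have h := hpsd (x + t • y) (U.add_mem hx (U.smul_mem t hy))
    rw [quad_add, bform_smul_right, bform_smul_left, quad_smul,
      bform_symm hM y x, hx0] at h
    nlinarith [h]
  set b := x ⬝ᵥ M.mulVec y with hb
  set qy := y ⬝ᵥ M.mulVec y with hqy
  have hqy0 : 0 ≤ qy := hpsd y hy
  have hbsq : b ^ 2 = 0 := by
    rcases eq_or_lt_of_le hqy0 with hq0 | hqpos
    · nlinarith [key (-b), sq_nonneg b, hq0]
    · have h := key (-b / qy)
      have hq : qy ≠ 0 := ne_of_gt hqpos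
      have hid : 2 * (-b / qy) * b + (-b / qy) ^ 2 * qy = -(b ^ 2 / qy) := by
        field_simp; ring
      rw [hid] at h
      have h2 : b ^ 2 / qy ≤ 0 := by linarith
      nlinarith [sq_nonneg b, mul_nonpos_of_nonpos_of_nonneg h2 (le_of_lt hqpos),
        div_mul_cancel₀ (b ^ 2) hq]
  exact sq_eq_zero_iff.mp hbsq

lemma combine_negdef (A B : Matrix (Fin N) (Fin N) ℝ) (hA : A.IsSymm)
    (W₁ W₂ : Submodule ℝ (Fin N → ℝ))
    (hW₂K : W₂ ≤ LinearMap.ker A.mulVecLin)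
    (h1 : ∀ x ∈ W₁, x ≠ 0 → x ⬝ᵥ A.mulVec x < 0)
    (h2 : ∀ x ∈ W₂, x ≠ 0 → x ⬝ᵥ B.mulVec x < 0) :
    W₁ ⊓ W₂ = ⊥ ∧ ∃ ε₀ > (0:ℝ), ∀ ε : ℝ, 0 < ε → ε < ε₀ →
      ∀ x ∈ W₁ ⊔ W₂, x ≠ 0 → x ⬝ᵥ ((1/ε) • A + B).mulVec x < 0 := by
  have hker : ∀ x ∈ W₂, A.mulVec x = 0 := by
    intro x hx
    have := hW₂K hx
    rwa [LinearMap.mem_ker, Matrix.mulVecLin_apply] at this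
  have hbot : W₁ ⊓ W₂ = ⊥ := by
    rw [eq_bot_iff]
    intro x hx
    rcases eq_or_ne x 0 with rfl | hx0
    · exact Submodule.zero_mem _
    · exfalso
      have h := h1 x hx.1 hx0
      rw [hker x hx.2, dotProduct_zero] at h
      exact lt_irrefl 0 h
  have key : ∀ x ∈ W₁ ⊔ W₂, x ⬝ᵥ A.mulVec x ≤ 0 ∧ (x ⬝ᵥ A.mulVec x = 0 → x ∈ W₂) := by
    intro x hx
    obtain ⟨a, ha, b, hb, rfl⟩ := Submodule.mem_sup.mp hx
    have hq : (a + b) ⬝ᵥ A.mulVec (a + b) = a ⬝ᵥ A.mulVec a := by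
      rw [quad_add, bform_symm hA b a, hker b hb]
      simp
    rcases eq_or_ne a 0 with rfl | ha0
    · rw [hq]
      exact ⟨by simp, fun _ => by simpa using hb⟩
    · have hlt := h1 a ha ha0
      rw [hq]
      exact ⟨le_of_lt hlt, fun h => absurd h (ne_of_lt hlt)⟩
  refine ⟨hbot, ?_⟩
  set S : Set (Fin N → ℝ) := {x | x ∈ W₁ ⊔ W₂ ∧ ‖x‖ = 1} with hSdef
  have hSsub : S ⊆ Metric.sphere 0 1 := by
    intro x hx
    simpa [mem_sphere_iff_norm] using hx.2
  have hScl : IsClosed S := by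
    have : S = ↑(W₁ ⊔ W₂) ∩ (Metric.sphere (0 : Fin N → ℝ) 1) := by
      ext x
      simp [hSdef, mem_sphere_iff_norm]
    rw [this]
    exact (Submodule.closed_of_finiteDimensional _).inter Metric.isClosed_sphere
  have hScpt : IsCompact S := (isCompact_sphere 0 1).of_isClosed_subset hScl hSsub
  have claim : ∃ ε₀ > (0:ℝ), ∀ ε : ℝ, 0 < ε → ε < ε₀ → ∀ u ∈ S,
      (1/ε) * (u ⬝ᵥ A.mulVec u) + u ⬝ᵥ B.mulVec u < 0 := by
    set K₁ : Set (Fin N → ℝ) := S ∩ {x | 0 ≤ x ⬝ᵥ B.mulVec x} with hK₁def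
    have hK₁cpt : IsCompact K₁ :=
      hScpt.inter_right (isClosed_le continuous_const (continuous_quad B))
    by_cases hne : K₁.Nonempty
    · obtain ⟨x₀, hx₀, hmax⟩ := hK₁cpt.exists_isMaxOn hne (continuous_quad A).continuousOn
      have hx₀S : x₀ ∈ S := hx₀.1
      have hx₀ne : x₀ ≠ 0 := by
        intro h
        rw [h] at hx₀S
        simpa using hx₀S.2
      have hfx₀ : x₀ ⬝ᵥ A.mulVec x₀ < 0 := by
        rcases lt_or_eq_of_le (key x₀ hx₀S.1).1 with h | h
        · exact h
        · exfalso
          have hxW₂ := (key x₀ hx₀S.1).2 h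
          exact absurd (h2 x₀ hxW₂ hx₀ne) (not_lt.mpr hx₀.2)
      obtain ⟨y₀, _, hgmax⟩ := hScpt.exists_isMaxOn ⟨x₀, hx₀S⟩ (continuous_quad B).continuousOn
      set c : ℝ := -(x₀ ⬝ᵥ A.mulVec x₀) with hcdef
      have hc : 0 < c := by simp [hcdef]; linarith
      set G : ℝ := max (y₀ ⬝ᵥ B.mulVec y₀) 0 with hGdef
      have hG0 : 0 ≤ G := le_max_right _ _
      refine ⟨c / (G + 1), by positivity, ?_⟩
      intro ε hε hεlt u huS
      have hfu0 : u ⬝ᵥ A.mulVec u ≤ 0 := (key u huS.1).1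
      by_cases hgu : u ⬝ᵥ B.mulVec u < 0
      · have : (1/ε) * (u ⬝ᵥ A.mulVec u) ≤ 0 :=
          mul_nonpos_of_nonneg_of_nonpos (by positivity) hfu0
        linarith
      · have huK : u ∈ K₁ := ⟨huS, not_lt.mp hgu⟩
        have hfu : u ⬝ᵥ A.mulVec u ≤ -c := by
          have := hmax huK
          simp only [hcdef, neg_neg]
          exact this
        have hgu' : u ⬝ᵥ B.mulVec u ≤ G := le_trans (hgmax huS) (le_max_left _ _)
        have h1ε : (1/ε) * (u ⬝ᵥ A.mulVec u) ≤ (1/ε) * (-c) :=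
          mul_le_mul_of_nonneg_left hfu (by positivity)
        have hεG : ε * (G + 1) < c := by
          have := (lt_div_iff₀ (by positivity : (0:ℝ) < G + 1)).mp hεlt
          linarith
        have hcε : G + 1 < c / ε := by
          rw [lt_div_iff₀ hε]
          linarith [hεG]
        have hre : (1/ε) * (-c) = -(c/ε) := by ring
        rw [hre] at h1ε
        linarith
    · refine ⟨1, one_pos, ?_⟩
      intro ε hε _ u huS
      have hgu : u ⬝ᵥ B.mulVec u < 0 := by
        by_contra h
        exact hne ⟨u, huS, not_lt.mp h⟩
      have : (1/ε) * (u ⬝ᵥ A.mulVec u) ≤ 0 :=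
        mul_nonpos_of_nonneg_of_nonpos (by positivity) (key u huS.1).1
      linarith
  obtain ⟨ε₀, hε₀, hclaim⟩ := claim
  refine ⟨ε₀, hε₀, ?_⟩
  intro ε hε hεlt x hxW hx0
  have hxn : ‖x‖ ≠ 0 := norm_ne_zero_iff.mpr hx0
  set u : Fin N → ℝ := ‖x‖⁻¹ • x with hudef
  have huS : u ∈ S := by
    constructor
    · exact Submodule.smul_mem _ _ hxW
    · rw [hudef, norm_smul, Real.norm_eq_abs, abs_inv, abs_norm, inv_mul_cancel₀ hxn]
  have hu := hclaim ε hε hεlt u huS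
  have hxu : x = ‖x‖ • u := by
    rw [hudef, smul_smul, mul_inv_cancel₀ hxn, one_smul]
  have hcalc : x ⬝ᵥ ((1/ε) • A + B).mulVec x
      = ‖x‖ ^ 2 * (u ⬝ᵥ ((1/ε) • A + B).mulVec u) := by
    conv_lhs => rw [hxu]
    rw [quad_smul]
  rw [hcalc]
  · have hn2 : 0 < ‖x‖ ^ 2 := by positivity
    have := quad_decomp A B (1/ε) u
    nlinarith [hu, hn2, this]

set_option synthInstance.maxHeartbeats 1000000 in
set_option maxHeartbeats 1000000 in
lemma exists_posdef_complement (M : Matrix (Fin N) (Fin N) ℝ) (hM : M.IsSymm)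
    (V R : Submodule ℝ (Fin N → ℝ))
    (hR : ∀ x ∈ V, (∀ y ∈ V, x ⬝ᵥ M.mulVec y = 0) → x ∈ R)
    (q : ℕ)
    (hex : ∃ W : Submodule ℝ (Fin N → ℝ), W ≤ V ∧ Module.finrank ℝ W = q ∧
      ∀ x ∈ W, x ≠ 0 → x ⬝ᵥ M.mulVec x < 0)
    (hmax : ∀ W : Submodule ℝ (Fin N → ℝ), W ≤ V →
      (∀ x ∈ W, x ≠ 0 → x ⬝ᵥ M.mulVec x < 0) → Module.finrank ℝ W ≤ q) :
    ∃ P : Submodule ℝ (Fin N → ℝ), P ≤ V ∧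
      Module.finrank ℝ V ≤ q + Module.finrank ℝ R + Module.finrank ℝ P ∧
      ∀ x ∈ P, x ≠ 0 → 0 < x ⬝ᵥ M.mulVec x := by
  classical
  obtain ⟨W, hWV, hWrank, hWneg⟩ := hex
  have bW : Module.Basis (Fin q) ℝ W := Module.finBasisOfFinrankEq ℝ W hWrank
  set T : (Fin N → ℝ) →ₗ[ℝ] (Fin q → ℝ) :=
    LinearMap.pi (fun i => bformL M ((bW i : Fin N → ℝ))) with hTdef
  have hTker : ∀ x, x ∈ LinearMap.ker T → ∀ i,
      x ⬝ᵥ M.mulVec ((bW i : Fin N → ℝ)) = 0 := by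
    intro x hx i
    have h := congrFun (LinearMap.mem_ker.mp hx) i
    simpa [hTdef, bformL, LinearMap.pi_apply] using h
  have horth : ∀ x ∈ LinearMap.ker T, ∀ w ∈ W, x ⬝ᵥ M.mulVec w = 0 := by
    intro x hx w hw
    have hL : (bformR M x) ∘ₗ W.subtype = 0 := by
      apply bW.ext
      intro i
      simp only [LinearMap.comp_apply, Submodule.coe_subtype, LinearMap.zero_apply]
      show x ⬝ᵥ M.mulVec ((bW i : Fin N → ℝ)) = 0
      exact hTker x hx i
    have h := LinearMap.ext_iff.mp hL ⟨w, hw⟩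
    simpa [bformR] using h
  set U : Submodule ℝ (Fin N → ℝ) := V ⊓ LinearMap.ker T with hUdef
  have hUV : U ≤ V := inf_le_left
  have hdim : Module.finrank ℝ V ≤ q + Module.finrank ℝ U := by
    have h1 := LinearMap.finrank_range_add_finrank_ker (T.domRestrict V)
    have h2 : Module.finrank ℝ (LinearMap.range (T.domRestrict V)) ≤ q := by
      have h := Submodule.finrank_le (LinearMap.range (T.domRestrict V))
      rwa [Module.finrank_fin_fun] at h
    have h3 : Module.finrank ℝ (LinearMap.ker (T.domRestrict V))
        = Module.finrank ℝ U := by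
      rw [LinearMap.ker_domRestrict]
      have hcomap : Submodule.comap V.subtype (LinearMap.ker T)
          = Submodule.comap V.subtype U := by
        ext ⟨x, hxV⟩
        simp [hUdef, hxV]
      rw [hcomap]
      exact (Submodule.comapSubtypeEquivOfLe hUV).finrank_eq
    omega
  have hUpsd : ∀ x ∈ U, 0 ≤ x ⬝ᵥ M.mulVec x := by
    intro x hxU
    by_contra hneg
    push_neg at hneg
    have hx0 : x ≠ 0 := by
      rintro rfl
      simp at hneg
    have hxnW : x ∉ W := fun hxW => absurd (horth x hxU.2 x hxW) (ne_of_lt hneg)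
    set W' := W ⊔ Submodule.span ℝ {x} with hW'def
    have hW'V : W' ≤ V := sup_le hWV (by
      rw [Submodule.span_singleton_le_iff_mem]; exact hxU.1)
    have hW'neg : ∀ z ∈ W', z ≠ 0 → z ⬝ᵥ M.mulVec z < 0 := by
      intro z hz hz0
      obtain ⟨w, hw, s, hs, rfl⟩ := Submodule.mem_sup.mp hz
      obtain ⟨t, rfl⟩ := Submodule.mem_span_singleton.mp hs
      have hwx : w ⬝ᵥ M.mulVec x = 0 := by
        rw [bform_symm hM]; exact horth x hxU.2 w hw
      have hxw : x ⬝ᵥ M.mulVec w = 0 := horth x hxU.2 w hw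
      rw [quad_add, bform_smul_right, bform_smul_left, quad_smul, hwx, hxw]
      rcases eq_or_ne t 0 with rfl | ht
      · have hw0 : w ≠ 0 := by simpa using hz0
        have h := hWneg w hw hw0
        simpa using h
      · have hw0 : w ⬝ᵥ M.mulVec w ≤ 0 := by
          rcases eq_or_ne w 0 with rfl | hw'
          · simp
          · exact le_of_lt (hWneg w hw hw')
        have ht2 : 0 < t ^ 2 := by positivity
        nlinarith [mul_neg_of_pos_of_neg ht2 hneg]
    have hdisj : Disjoint W (Submodule.span ℝ {x}) :=
      (Submodule.disjoint_span_singleton' hx0).mpr hxnW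
    have hrank' : Module.finrank ℝ W' = q + 1 := by
      have h := Submodule.finrank_sup_add_finrank_inf_eq W (Submodule.span ℝ {x})
      rw [disjoint_iff.mp hdisj, hWrank, finrank_span_singleton hx0] at h
      simpa [hW'def, finrank_bot] using h
    have h := hmax W' hW'V hW'neg
    omega
  have hWUdisj : W ⊓ U = ⊥ := by
    rw [eq_bot_iff]
    rintro x ⟨hxW, hxU⟩
    rcases eq_or_ne x 0 with rfl | hx0
    · exact Submodule.zero_mem _
    · exact absurd (horth x hxU.2 x hxW) (ne_of_lt (hWneg x hxW hx0))
  have hsum : Module.finrank ℝ (W ⊔ U : Submodule ℝ (Fin N → ℝ))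
      = q + Module.finrank ℝ U := by
    have h := Submodule.finrank_sup_add_finrank_inf_eq W U
    rw [hWUdisj, hWrank] at h
    simpa [finrank_bot] using h
  have hVeq : W ⊔ U = V := by
    exact Submodule.eq_of_le_of_finrank_le (sup_le hWV hUV) (by rw [hsum]; omega)
  obtain ⟨C, hC⟩ := Submodule.exists_isCompl (U ⊓ R)
  have hmod : (U ⊓ R) ⊔ (U ⊓ C) = U := by
    have h := sup_inf_assoc_of_le C (inf_le_left : U ⊓ R ≤ U)
    rw [hC.sup_eq_top, top_inf_eq, inf_comm C U] at h
    exact h.symm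
  have hdisj2 : (U ⊓ R) ⊓ (U ⊓ C) = ⊥ := by
    rw [eq_bot_iff]
    calc (U ⊓ R) ⊓ (U ⊓ C) ≤ (U ⊓ R) ⊓ C := inf_le_inf_left _ inf_le_right
    _ = ⊥ := disjoint_iff.mp hC.disjoint
  refine ⟨U ⊓ C, le_trans inf_le_left hUV, ?_, ?_⟩
  · have h := Submodule.finrank_sup_add_finrank_inf_eq (U ⊓ R) (U ⊓ C)
    rw [hmod, hdisj2] at h
    simp only [finrank_bot, add_zero] at h
    have hUR : Module.finrank ℝ (U ⊓ R : Submodule ℝ (Fin N → ℝ))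
        ≤ Module.finrank ℝ R := Submodule.finrank_mono inf_le_right
    omega
  · rintro x ⟨hxU, hxC⟩ hx0
    rcases eq_or_lt_of_le (hUpsd x hxU) with heq | hlt
    · exfalso
      have hnull := psd_null M hM U hUpsd hxU heq.symm
      have hxR : x ∈ R := by
        apply hR x (hUV hxU)
        intro y hy
        rw [← hVeq] at hy
        obtain ⟨w, hw, u, hu, rfl⟩ := Submodule.mem_sup.mp hy
        rw [Matrix.mulVec_add, dotProduct_add, horth x hxU.2 w hw,
          hnull u hu, add_zero]
      exact hx0 (Submodule.disjoint_def.mp hC.disjoint x ⟨hxU, hxR⟩ hxC)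
    · exact hlt

end IndexPerturbAux

open IndexPerturbAux in
/-- Spectral perturbation lemma behind the index computation: if `A`, `B` are
real symmetric `N × N` matrices, `q` is the negative index of `A`, `q'` is the negative index
of `B` restricted to `K = ker A`, and `B` is nondegenerate on `K`, then for all sufficiently
small `ε > 0` the matrix `(1/ε)A + B` is invertible with negative index `q + q'`. -/
theorem index_of_perturbed_quadratic_form
    (N : ℕ) (hN : 1 ≤ N) (A B : Matrix (Fin N) (Fin N) ℝ)
    (hA : A.IsSymm) (hB : B.IsSymm)
    (K : Submodule ℝ (Fin N → ℝ)) (hK : K = LinearMap.ker A.mulVecLin)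
    (q q' : ℕ)
    (hq : IsGreatest {d : ℕ | ∃ W : Submodule ℝ (Fin N → ℝ), Module.finrank ℝ W = d ∧
      ∀ x ∈ W, x ≠ 0 → x ⬝ᵥ A.mulVec x < 0} q)
    (hq' : IsGreatest {d : ℕ | ∃ W : Submodule ℝ (Fin N → ℝ), W ≤ K ∧
      Module.finrank ℝ W = d ∧ ∀ x ∈ W, x ≠ 0 → x ⬝ᵥ B.mulVec x < 0} q')
    (hnd : ∀ x ∈ K, x ≠ 0 → ∃ y ∈ K, x ⬝ᵥ B.mulVec y ≠ 0) :
    ∃ ε₁ > (0 : ℝ), ∀ ε : ℝ, 0 < ε → ε < ε₁ →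
      IsUnit ((1 / ε) • A + B) ∧
      IsGreatest {d : ℕ | ∃ W : Submodule ℝ (Fin N → ℝ), Module.finrank ℝ W = d ∧
        ∀ x ∈ W, x ≠ 0 → x ⬝ᵥ ((1 / ε) • A + B).mulVec x < 0} (q + q') := by
  classical
  obtain ⟨Wq, hWqrank, hWqneg⟩ := hq.1
  obtain ⟨Wq', hWq'K, hWq'rank, hWq'neg⟩ := hq'.1
  obtain ⟨hdisjN, εa, hεa, hnegall⟩ :=
    combine_negdef A B hA Wq Wq' (hK ▸ hWq'K) hWqneg hWq'neg
  set Wneg := Wq ⊔ Wq' with hWnegdef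
  have hWnegrank : Module.finrank ℝ Wneg = q + q' := by
    have h := Submodule.finrank_sup_add_finrank_inf_eq Wq Wq'
    rw [hdisjN, hWqrank, hWq'rank] at h
    simpa [hWnegdef, finrank_bot] using h
  -- positive definite complement for A on the whole space
  obtain ⟨P₁, _, hdim1, hP₁pos⟩ := exists_posdef_complement A hA ⊤ K
    (by
      intro x _ h
      rw [hK, LinearMap.mem_ker, Matrix.mulVecLin_apply]
      have h2 : (A.mulVec x) ⬝ᵥ (A.mulVec x) = 0 := by
        rw [bform_symm hA]
        exact h (A.mulVec x) trivial
      exact dotProduct_self_eq_zero.mp h2)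
    q ⟨Wq, le_top, hWqrank, hWqneg⟩
    (fun W _ hneg => hq.2 ⟨W, rfl, hneg⟩)
  -- positive definite complement for B on K
  obtain ⟨P₂, hP₂K, hdim2, hP₂pos⟩ := exists_posdef_complement B hB K ⊥
    (by
      intro x hxK h
      rw [Submodule.mem_bot]
      by_contra hx0
      obtain ⟨y, hyK, hne⟩ := hnd x hxK hx0
      exact hne (h y hyK))
    q' ⟨Wq', hWq'K, hWq'rank, hWq'neg⟩
    (fun W hWK hneg => hq'.2 ⟨W, hWK, rfl, hneg⟩)
  have hNle : N ≤ q + Module.finrank ℝ K + Module.finrank ℝ P₁ := by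
    have := hdim1
    rwa [finrank_top, Module.finrank_fin_fun] at this
  have hkle : Module.finrank ℝ K ≤ q' + Module.finrank ℝ P₂ := by
    have := hdim2
    simpa [finrank_bot] using this
  -- combine positive parts using -A, -B
  have hA' : (-A).IsSymm := by
    unfold Matrix.IsSymm
    rw [Matrix.transpose_neg, hA.eq]
  have hP₂ker : P₂ ≤ LinearMap.ker (-A).mulVecLin := by
    intro x hx
    have hxK : x ∈ LinearMap.ker A.mulVecLin := hK ▸ (hP₂K hx)
    rw [LinearMap.mem_ker, Matrix.mulVecLin_apply] at hxK ⊢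
    rw [Matrix.neg_mulVec, hxK, neg_zero]
  obtain ⟨hdisjP, εb, hεb, hposall'⟩ := combine_negdef (-A) (-B) hA' P₁ P₂ hP₂ker
    (fun x hx hx0 => by
      rw [Matrix.neg_mulVec, dotProduct_neg]
      linarith [hP₁pos x hx hx0])
    (fun x hx hx0 => by
      rw [Matrix.neg_mulVec, dotProduct_neg]
      linarith [hP₂pos x hx hx0])
  set Wpos := P₁ ⊔ P₂ with hWposdef
  have hWposrank : N ≤ q + q' + Module.finrank ℝ Wpos := by
    have h := Submodule.finrank_sup_add_finrank_inf_eq P₁ P₂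
    rw [hdisjP] at h
    simp only [finrank_bot, add_zero] at h
    rw [← hWposdef] at h
    have h4 : Module.finrank ℝ K ≤ q' + Module.finrank ℝ P₂ := hkle
    omega
  refine ⟨min εa εb, lt_min hεa hεb, ?_⟩
  intro ε hε hεlt
  set C := (1/ε) • A + B with hCdef
  have hCsymm : C.IsSymm := by
    unfold Matrix.IsSymm
    rw [hCdef, Matrix.transpose_add, Matrix.transpose_smul, hA.eq, hB.eq]
  have hneg : ∀ x ∈ Wneg, x ≠ 0 → x ⬝ᵥ C.mulVec x < 0 :=
    hnegall ε hε (lt_of_lt_of_le hεlt (min_le_left _ _))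
  have hpos : ∀ x ∈ Wpos, x ≠ 0 → 0 < x ⬝ᵥ C.mulVec x := by
    intro x hx hx0
    have h := hposall' ε hε (lt_of_lt_of_le hεlt (min_le_right _ _)) x hx hx0
    have hre : (1/ε) • (-A) + (-B) = -C := by
      rw [hCdef, smul_neg, neg_add]
    rw [hre, Matrix.neg_mulVec, dotProduct_neg] at h
    linarith
  have hfinle : ∀ (W : Submodule ℝ (Fin N → ℝ)),
      Module.finrank ℝ W ≤ N := by
    intro W
    have := Submodule.finrank_le W
    rwa [Module.finrank_fin_fun] at this
  constructor
  · -- invertibility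
    rw [Matrix.isUnit_iff_isUnit_det, isUnit_iff_ne_zero]
    intro hdet
    obtain ⟨v, hv0, hvker⟩ := Matrix.exists_mulVec_eq_zero_iff.mpr hdet
    have hvnot : v ∉ Wpos := by
      intro h
      have := hpos v h hv0
      rw [hvker, dotProduct_zero] at this
      exact lt_irrefl 0 this
    set Wpos' := Wpos ⊔ Submodule.span ℝ {v} with hWpos'def
    have hdisjv : Disjoint Wpos (Submodule.span ℝ {v}) :=
      (Submodule.disjoint_span_singleton' hv0).mpr hvnot
    have hWpos'rank : Module.finrank ℝ Wpos' = Module.finrank ℝ Wpos + 1 := by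
      have h := Submodule.finrank_sup_add_finrank_inf_eq Wpos (Submodule.span ℝ {v})
      rw [disjoint_iff.mp hdisjv, finrank_span_singleton hv0] at h
      simpa [hWpos'def, finrank_bot] using h
    have hQnonneg : ∀ x ∈ Wpos', 0 ≤ x ⬝ᵥ C.mulVec x := by
      intro x hx
      obtain ⟨w, hw, s, hs, rfl⟩ := Submodule.mem_sup.mp hx
      obtain ⟨t, rfl⟩ := Submodule.mem_span_singleton.mp hs
      have h1 : w ⬝ᵥ C.mulVec v = 0 := by rw [hvker, dotProduct_zero]
      have h2 : v ⬝ᵥ C.mulVec w = 0 := by rw [bform_symm hCsymm, h1]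
      have h3 : v ⬝ᵥ C.mulVec v = 0 := by rw [hvker, dotProduct_zero]
      rw [quad_add, bform_smul_right, bform_smul_left, quad_smul, h1, h2, h3]
      have hw0 : 0 ≤ w ⬝ᵥ C.mulVec w := by
        rcases eq_or_ne w 0 with rfl | hw'
        · simp
        · exact le_of_lt (hpos w hw hw')
      nlinarith
    have hint : 0 < Module.finrank ℝ (Wneg ⊓ Wpos' : Submodule ℝ (Fin N → ℝ)) := by
      have h := Submodule.finrank_sup_add_finrank_inf_eq Wneg Wpos'
      have hsle := hfinle (Wneg ⊔ Wpos')
      rw [hWnegrank, hWpos'rank] at h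
      omega
    have hne : (Wneg ⊓ Wpos' : Submodule ℝ (Fin N → ℝ)) ≠ ⊥ := by
      intro h
      rw [h, finrank_bot] at hint
      exact lt_irrefl 0 hint
    obtain ⟨x, hx, hx0⟩ := Submodule.exists_mem_ne_zero_of_ne_bot hne
    have h1 := hneg x hx.1 hx0
    have h2 := hQnonneg x hx.2
    linarith
  · constructor
    · exact ⟨Wneg, hWnegrank, hneg⟩
    · rintro d ⟨W, rfl, hWneg2⟩
      have hdisj3 : W ⊓ Wpos = ⊥ := by
        rw [eq_bot_iff]
        intro x hx
        rcases eq_or_ne x 0 with rfl | hx0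
        · exact Submodule.zero_mem _
        · exfalso
          have h1 := hWneg2 x hx.1 hx0
          have h2 := hpos x hx.2 hx0
          linarith
      have h := Submodule.finrank_sup_add_finrank_inf_eq W Wpos
      rw [hdisj3] at h
      simp only [finrank_bot, add_zero] at h
      have hsle := hfinle (W ⊔ Wpos)
      omega
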